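/- arXiv:2205.12021 — 2 statements merged into one kernel-verified Lean document; each statement's English description precedes it below -/
import Mathlib

section
/- Let T : ℝ^s → ℝ^s be a C¹ diffeomorphism such that T is Lipschitz continuous with constant K and T⁻¹ is Lipschitz continuous with constant L, and let P_Z be the standard Gaussian measure on ℝ^s with density p_Z(z) = (2π)^{−s/2} exp(−‖z‖²/2). Denote by p_{T_#P_Z}(p) = p_Z(T⁻¹(p)) · |det D(T⁻¹)(p)| the density of the pushforward measure T_# P_Z. Then for every p ∈ ℝ^s, (1/(L^s K^s)) · N(p | T(0), L^{−2} I) ≤ p_{T_#P_Z}(p) ≤ L^s K^s · N(p | T(0), K² I), where N(p | m, σ² I) = (2πσ²)^{−s/2} exp(−‖p − m‖²/(2σ²)) denotes the density of the Gaussian distribution on ℝ^s with mean m and covariance σ² I. -/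
open MeasureTheory

/-- The density of the standard Gaussian measure on `ℝ^s`:
`p_Z(z) = (2π)^{-s/2} exp(-‖z‖²/2)`. -/
noncomputable def stdGaussianDensity (s : ℕ) (z : EuclideanSpace ℝ (Fin s)) : ℝ :=
  (2 * Real.pi) ^ (-(s : ℝ) / 2) * Real.exp (-‖z‖ ^ 2 / 2)

/-- The density `N(p | m, σ²I) = (2πσ²)^{-s/2} exp(-‖p-m‖²/(2σ²))` of the isotropic
Gaussian on `ℝ^s` with mean `m` and variance `v = σ²`. -/
noncomputable def gaussDensity (s : ℕ) (m : EuclideanSpace ℝ (Fin s)) (v : ℝ)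
    (p : EuclideanSpace ℝ (Fin s)) : ℝ :=
  (2 * Real.pi * v) ^ (-(s : ℝ) / 2) * Real.exp (-‖p - m‖ ^ 2 / (2 * v))

lemma aux_rpow_sq_neg {a : ℝ} (ha : 0 < a) (s : ℕ) :
    ((a ^ 2 : ℝ)) ^ (-(s : ℝ) / 2) = ((a ^ s : ℝ))⁻¹ := by
  rw [← Real.rpow_natCast a 2, ← Real.rpow_mul ha.le, ← Real.rpow_natCast a s,
    ← Real.rpow_neg ha.le]
  congr 1
  push_cast
  ring

lemma aux_rpow_inv_sq_neg {a : ℝ} (ha : 0 < a) (s : ℕ) :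
    (((a ^ 2)⁻¹ : ℝ)) ^ (-(s : ℝ) / 2) = (a ^ s : ℝ) := by
  rw [Real.inv_rpow (by positivity), aux_rpow_sq_neg ha, inv_inv]

/-- `|det A| ≤ ‖A‖ ^ s` for a continuous linear endomorphism of `ℝ^s`. -/
lemma aux_abs_det_le_norm_pow (s : ℕ)
    (A : EuclideanSpace ℝ (Fin s) →L[ℝ] EuclideanSpace ℝ (Fin s)) :
    |A.det| ≤ ‖A‖ ^ s := by
  set E := EuclideanSpace ℝ (Fin s)
  have himg : A '' Metric.closedBall (0 : E) 1 ⊆ Metric.closedBall (0 : E) ‖A‖ := by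
    rintro _ ⟨x, hx, rfl⟩
    simp only [Metric.mem_closedBall, dist_zero_right] at hx ⊢
    calc ‖A x‖ ≤ ‖A‖ * ‖x‖ := A.le_opNorm x
      _ ≤ ‖A‖ * 1 := by
          exact mul_le_mul_of_nonneg_left hx (norm_nonneg A)
      _ = ‖A‖ := mul_one _
  have h1 : volume (A '' Metric.closedBall (0 : E) 1)
      = ENNReal.ofReal |A.det| * volume (Metric.closedBall (0 : E) 1) :=
    Measure.addHaar_image_continuousLinearMap _ _ _
  have h2 : volume (Metric.closedBall (0 : E) ‖A‖)
      = ENNReal.ofReal (‖A‖ ^ s) * volume (Metric.closedBall (0 : E) 1) := by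
    have := Measure.addHaar_closedBall' (volume : Measure E) (0 : E) (norm_nonneg A)
    rwa [finrank_euclideanSpace_fin] at this
  have hle : ENNReal.ofReal |A.det| * volume (Metric.closedBall (0 : E) 1)
      ≤ ENNReal.ofReal (‖A‖ ^ s) * volume (Metric.closedBall (0 : E) 1) := by
    rw [← h1, ← h2]
    exact measure_mono himg
  have hV0 : volume (Metric.closedBall (0 : E) 1) ≠ 0 :=
    (Metric.measure_closedBall_pos volume _ one_pos).ne'
  have hVt : volume (Metric.closedBall (0 : E) 1) ≠ ⊤ := measure_closedBall_lt_top.ne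
  have hof : ENNReal.ofReal |A.det| ≤ ENNReal.ofReal (‖A‖ ^ s) :=
    (ENNReal.mul_le_mul_iff_left hV0 hVt).mp hle
  exact (ENNReal.ofReal_le_ofReal_iff (by positivity)).mp hof

/-- Lemma 2 of the paper: for a `C¹` diffeomorphism `T` of `ℝ^s` with
`Lip(T) ≤ K` and `Lip(T⁻¹) ≤ L`, the density
`p_{T_#P_Z}(p) = p_Z(T⁻¹ p)·|det D(T⁻¹)(p)|` of the pushforward of the standard
Gaussian satisfies
`(1/(L^s K^s)) · N(p | T 0, L⁻² I) ≤ p_{T_#P_Z}(p) ≤ L^s K^s · N(p | T 0, K² I)`. -/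
theorem stmt_5 (s : ℕ) (K L : NNReal)
    (T Tinv : EuclideanSpace ℝ (Fin s) → EuclideanSpace ℝ (Fin s))
    (hleft : Function.LeftInverse Tinv T) (hright : Function.RightInverse Tinv T)
    (hT : ContDiff ℝ 1 T) (hTinv : ContDiff ℝ 1 Tinv)
    (hK : LipschitzWith K T) (hL : LipschitzWith L Tinv)
    (p : EuclideanSpace ℝ (Fin s)) :
    (1 / ((L : ℝ) ^ s * (K : ℝ) ^ s)) * gaussDensity s (T 0) (((L : ℝ) ^ 2)⁻¹) p
        ≤ stdGaussianDensity s (Tinv p) * |(fderiv ℝ Tinv p).det| ∧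
      stdGaussianDensity s (Tinv p) * |(fderiv ℝ Tinv p).det|
        ≤ (L : ℝ) ^ s * (K : ℝ) ^ s * gaussDensity s (T 0) ((K : ℝ) ^ 2) p := by
  rcases Nat.eq_zero_or_pos s with hs | hs
  · subst hs
    have hfr : Module.finrank ℝ (EuclideanSpace ℝ (Fin 0)) = 0 := by simp
    have hdet : (fderiv ℝ Tinv p).det = 1 :=
      LinearMap.det_eq_one_of_finrank_eq_zero hfr _
    have hz : ∀ z : EuclideanSpace ℝ (Fin 0), ‖z‖ = 0 := fun z => by
      rw [Subsingleton.elim z 0, norm_zero]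
    constructor <;>
      simp [stdGaussianDensity, gaussDensity, hdet, hz]
  · -- nondegeneracy of the Lipschitz constants
    set e : EuclideanSpace ℝ (Fin s) := EuclideanSpace.single ⟨0, hs⟩ (1 : ℝ) with he_def
    have he : e ≠ 0 := by
      have : ‖e‖ = 1 := by simp [he_def]
      intro h
      rw [h, norm_zero] at this
      norm_num at this
    have hKne : K ≠ 0 := by
      rintro rfl
      have h1 : T e = T 0 := by
        have := hK e 0
        simpa [edist_eq_zero] using this
      exact he (by rw [← hleft e, h1, hleft 0])
    have hLne : L ≠ 0 := by
      rintro rfl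
      have h1 : Tinv (T e) = Tinv (T 0) := by
        have := hL (T e) (T 0)
        simpa [edist_eq_zero] using this
      exact he (by rw [← hleft e, h1, hleft 0])
    have hK0 : (0 : ℝ) < (K : ℝ) := by positivity
    have hL0 : (0 : ℝ) < (L : ℝ) := by positivity
    -- derivative facts
    have hTd : Differentiable ℝ T := hT.differentiable one_ne_zero
    have hTid : Differentiable ℝ Tinv := hTinv.differentiable one_ne_zero
    set A := fderiv ℝ Tinv p with hA
    set B := fderiv ℝ T (Tinv p) with hB
    have hid : T ∘ Tinv = id := funext hright
    have hcomp : fderiv ℝ (T ∘ Tinv) p = B.comp A := fderiv_comp (x := p) (hTd _) (hTid p)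
    have hBA : B.comp A = ContinuousLinearMap.id ℝ _ := by
      rw [← hcomp, hid, fderiv_id]
    have hdet1 : B.det * A.det = 1 := by
      have := congrArg ContinuousLinearMap.det hBA
      simpa [ContinuousLinearMap.det, ContinuousLinearMap.coe_comp,
        LinearMap.det_comp] using this
    have hnA : ‖A‖ ≤ (L : ℝ) := norm_fderiv_le_of_lipschitz ℝ hL
    have hnB : ‖B‖ ≤ (K : ℝ) := norm_fderiv_le_of_lipschitz ℝ hK
    have hdA : |A.det| ≤ (L : ℝ) ^ s :=
      (aux_abs_det_le_norm_pow s A).trans (pow_le_pow_left₀ (norm_nonneg A) hnA s)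
    have hdB : |B.det| ≤ (K : ℝ) ^ s :=
      (aux_abs_det_le_norm_pow s B).trans (pow_le_pow_left₀ (norm_nonneg B) hnB s)
    have habs : |B.det| * |A.det| = 1 := by rw [← abs_mul, hdet1, abs_one]
    have hKs : (0 : ℝ) < (K : ℝ) ^ s := by positivity
    have hLs : (0 : ℝ) < (L : ℝ) ^ s := by positivity
    have hdA_lower : 1 / (K : ℝ) ^ s ≤ |A.det| := by
      rw [div_le_iff₀ hKs]
      calc (1 : ℝ) = |B.det| * |A.det| := habs.symm
        _ ≤ (K : ℝ) ^ s * |A.det| :=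
            mul_le_mul_of_nonneg_right hdB (abs_nonneg _)
        _ = |A.det| * (K : ℝ) ^ s := mul_comm _ _
    -- distance estimates
    have hx1 : ‖Tinv p‖ ≤ (L : ℝ) * ‖p - T 0‖ := by
      have := hL.dist_le_mul p (T 0)
      simpa [hleft 0, dist_eq_norm] using this
    have hx2 : ‖p - T 0‖ ≤ (K : ℝ) * ‖Tinv p‖ := by
      have := hK.dist_le_mul (Tinv p) 0
      simpa [hright p, dist_eq_norm] using this
    set d := ‖p - T 0‖ with hd
    set x := ‖Tinv p‖ with hx
    have hd0 : 0 ≤ d := norm_nonneg _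
    have hx0 : 0 ≤ x := norm_nonneg _
    have hEL : Real.exp (-((L : ℝ) * d) ^ 2 / 2) ≤ Real.exp (-x ^ 2 / 2) := by
      apply Real.exp_le_exp.mpr
      have : x ^ 2 ≤ ((L : ℝ) * d) ^ 2 := pow_le_pow_left₀ hx0 hx1 2
      linarith
    have hEU : Real.exp (-x ^ 2 / 2) ≤ Real.exp (-(d / (K : ℝ)) ^ 2 / 2) := by
      apply Real.exp_le_exp.mpr
      have hdiv : d / (K : ℝ) ≤ x := by
        rw [div_le_iff₀ hK0]
        calc d ≤ (K : ℝ) * x := hx2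
          _ = x * (K : ℝ) := mul_comm _ _
      have : (d / (K : ℝ)) ^ 2 ≤ x ^ 2 := pow_le_pow_left₀ (by positivity) hdiv 2
      linarith
    set c := (2 * Real.pi) ^ (-(s : ℝ) / 2) with hc_def
    have hc : 0 < c := Real.rpow_pos_of_pos (by positivity) _
    have e1 : gaussDensity s (T 0) (((L : ℝ) ^ 2)⁻¹) p
        = c * (L : ℝ) ^ s * Real.exp (-((L : ℝ) * d) ^ 2 / 2) := by
      unfold gaussDensity
      rw [Real.mul_rpow (by positivity) (by positivity), aux_rpow_inv_sq_neg hL0]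
      rw [← hd, ← hc_def]
      congr 1
      field_simp
    have e2 : gaussDensity s (T 0) ((K : ℝ) ^ 2) p
        = c * ((K : ℝ) ^ s)⁻¹ * Real.exp (-(d / (K : ℝ)) ^ 2 / 2) := by
      unfold gaussDensity
      rw [Real.mul_rpow (by positivity) (by positivity), aux_rpow_sq_neg hK0]
      rw [← hd, ← hc_def]
      congr 1
      rw [div_pow]
      ring
    have estd : stdGaussianDensity s (Tinv p) = c * Real.exp (-x ^ 2 / 2) := by
      unfold stdGaussianDensity
      rw [← hx, ← hc_def]
    constructor
    · rw [e1, estd]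
      calc 1 / ((L : ℝ) ^ s * (K : ℝ) ^ s)
            * (c * (L : ℝ) ^ s * Real.exp (-((L : ℝ) * d) ^ 2 / 2))
          = c * ((1 / (K : ℝ) ^ s) * Real.exp (-((L : ℝ) * d) ^ 2 / 2)) := by
            field_simp
        _ ≤ c * (|A.det| * Real.exp (-x ^ 2 / 2)) := by
            apply mul_le_mul_of_nonneg_left _ hc.le
            exact mul_le_mul hdA_lower hEL (Real.exp_pos _).le (abs_nonneg _)
        _ = c * Real.exp (-x ^ 2 / 2) * |A.det| := by ring
    · rw [e2, estd]
      calc c * Real.exp (-x ^ 2 / 2) * |A.det|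
          = c * (Real.exp (-x ^ 2 / 2) * |A.det|) := by ring
        _ ≤ c * (Real.exp (-(d / (K : ℝ)) ^ 2 / 2) * (L : ℝ) ^ s) := by
            apply mul_le_mul_of_nonneg_left _ hc.le
            exact mul_le_mul hEU hdA (abs_nonneg _) (Real.exp_pos _).le
        _ = (L : ℝ) ^ s * (K : ℝ) ^ s
            * (c * ((K : ℝ) ^ s)⁻¹ * Real.exp (-(d / (K : ℝ)) ^ 2 / 2)) := by
            field_simp
end

section
/- Let d, s, N_p be positive natural numbers with s ≤ d, and for each i ∈ {1,…,N_p} let τ_i : Fin s → Fin d be an injection with associated patch-extraction map P_i : (Fin d → ℝ) → (Fin s → ℝ), (P_i x)_j = x_{τ_i(j)}, and assume that the ranges of τ_1,…,τ_{N_p} cover Fin d (every pixel belongs to at least one patch). Let T : ℝ^s → ℝ^s be a C¹ diffeomorphism with Lip(T) < ∞ and Lip(T⁻¹) < ∞, let P_Z be the standard Gaussian measure on ℝ^s with density p_Z(z) = (2π)^{−s/2} exp(−‖z‖²/2), and let p_{T_#P_Z}(p) = p_Z(T⁻¹(p)) · |det D(T⁻¹)(p)| be the density of T_# P_Z. Define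 patchNR(x) = (1/s) · Σ_{i=1}^{N_p} (− log p_{T_#P_Z}(P_i(x))) for x ∈ Fin d → ℝ. Then for every ρ > 0 the function φ(x) = exp(−ρ · patchNR(x)) belongs to L¹ with respect to Lebesgue measure on Fin d → ℝ, i.e. ∫_{ℝ^d} exp(−ρ · patchNR(x)) dx < ∞. -/
open MeasureTheory

/-- The density `p ↦ p_Z(T⁻¹ p)·|det D(T⁻¹)(p)|` of the pushforward `T_# P_Z` of the
standard Gaussian under a `C¹` diffeomorphism `T` with inverse `Tinv`. -/
noncomputable def pushforwardDensity (s : ℕ)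
    (Tinv : EuclideanSpace ℝ (Fin s) → EuclideanSpace ℝ (Fin s))
    (p : EuclideanSpace ℝ (Fin s)) : ℝ :=
  stdGaussianDensity s (Tinv p) * |(fderiv ℝ Tinv p).det|

/-- The patch normalizing flow regularizer
`patchNR x = (1/s) ∑ i, -log p_{T_#P_Z}(P_i x)`, with patches
`P_i x = fun j => x (τ i j)` viewed as points of `ℝ^s = EuclideanSpace ℝ (Fin s)`. -/
noncomputable def patchNR (d s Np : ℕ) (τ : Fin Np → Fin s → Fin d)
    (Tinv : EuclideanSpace ℝ (Fin s) → EuclideanSpace ℝ (Fin s))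
    (x : Fin d → ℝ) : ℝ :=
  (1 / (s : ℝ)) *
    ∑ i : Fin Np,
      -Real.log (pushforwardDensity s Tinv
        ((WithLp.equiv 2 (Fin s → ℝ)).symm fun j => x (τ i j)))

/-- squared Euclidean norm is the sum of squares of the coordinates. -/
lemma aux_euclid_norm_sq {s : ℕ} (y : EuclideanSpace ℝ (Fin s)) :
    ‖y‖ ^ 2 = ∑ j, (y j) ^ 2 := by
  rw [EuclideanSpace.norm_eq, Real.sq_sqrt (by positivity)]
  simp [Real.norm_eq_abs, sq_abs]

/-- each coordinate is bounded by the Euclidean norm. -/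
lemma aux_abs_coord_le {s : ℕ} (y : EuclideanSpace ℝ (Fin s)) (i : Fin s) :
    |y i| ≤ ‖y‖ := by
  have h : (y i) ^ 2 ≤ ‖y‖ ^ 2 := by
    rw [aux_euclid_norm_sq]
    exact Finset.single_le_sum (f := fun j => (y j) ^ 2)
      (fun j _ => sq_nonneg _) (Finset.mem_univ i)
  calc |y i| = Real.sqrt ((y i) ^ 2) := (Real.sqrt_sq_eq_abs _).symm
    _ ≤ Real.sqrt (‖y‖ ^ 2) := Real.sqrt_le_sqrt h
    _ = ‖y‖ := Real.sqrt_sq (norm_nonneg _)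

/-- entrywise bound gives a determinant bound for real matrices. -/
lemma aux_matrix_det_le {s : ℕ} (A : Matrix (Fin s) (Fin s) ℝ) {C : ℝ}
    (hx : ∀ i j, |A i j| ≤ C) : |A.det| ≤ (Nat.factorial s : ℝ) * C ^ s := by
  have hx' : ∀ i j, AbsoluteValue.abs (A i j) ≤ C := hx
  have hmd := Matrix.det_le hx'
  simp only [AbsoluteValue.abs_apply, Fintype.card_fin, nsmul_eq_mul] at hmd
  exact hmd

/-- determinant bound for a continuous linear endomorphism of `ℝ^s` with bounded norm. -/
lemma aux_abs_det_le {s : ℕ}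
    (f : EuclideanSpace ℝ (Fin s) →L[ℝ] EuclideanSpace ℝ (Fin s))
    {C : ℝ} (hC : 0 ≤ C) (h : ‖f‖ ≤ C) :
    |f.det| ≤ (Nat.factorial s : ℝ) * C ^ s := by
  classical
  set b := (EuclideanSpace.basisFun (Fin s) ℝ).toBasis with hb
  have hdet : f.det = (LinearMap.toMatrix b b (↑f : _ →ₗ[ℝ] _)).det :=
    (LinearMap.det_toMatrix b _).symm
  have hx : ∀ i j, |(LinearMap.toMatrix b b (↑f : _ →ₗ[ℝ] _)) i j| ≤ C := by
    intro i j
    rw [LinearMap.toMatrix_apply]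
    have hrep : b.repr ((↑f : _ →ₗ[ℝ] _) (b j)) i = (f (b j)) i := by
      rw [hb, OrthonormalBasis.coe_toBasis_repr_apply, EuclideanSpace.basisFun_repr]
      rfl
    rw [hrep]
    have h1 : |(f (b j)) i| ≤ ‖f (b j)‖ := aux_abs_coord_le _ _
    have h3 : ‖b j‖ = 1 := by
      rw [hb, OrthonormalBasis.coe_toBasis]
      exact (EuclideanSpace.basisFun (Fin s) ℝ).orthonormal.1 j
    have h2 : ‖f (b j)‖ ≤ ‖f‖ := by
      have := f.le_opNorm (b j)
      rwa [h3, mul_one] at this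
    linarith
  rw [hdet]
  exact aux_matrix_det_le _ hx

/-- covering inequality: if the patches cover every pixel, the sum of squares over all
patch coordinates dominates the total sum of squares. -/
lemma aux_cover_sum {d s Np : ℕ} (τ : Fin Np → Fin s → Fin d)
    (hcover : ∀ k : Fin d, ∃ i j, τ i j = k) (x : Fin d → ℝ) :
    ∑ k, (x k) ^ 2 ≤ ∑ i : Fin Np, ∑ j : Fin s, (x (τ i j)) ^ 2 := by
  classical
  choose I J hIJ using hcover
  have hinj : Function.Injective (fun k : Fin d => ((I k, J k) : Fin Np × Fin s)) := by
    intro k₁ k₂ h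
    have h' := congrArg (fun p : Fin Np × Fin s => τ p.1 p.2) h
    simpa [hIJ] using h'
  calc ∑ k, (x k) ^ 2 = ∑ k, (x (τ (I k) (J k))) ^ 2 := by simp [hIJ]
    _ = ∑ p ∈ Finset.univ.image (fun k : Fin d => ((I k, J k) : Fin Np × Fin s)),
          (x (τ p.1 p.2)) ^ 2 := by
        rw [Finset.sum_image (fun a _ b _ h => hinj h)]
    _ ≤ ∑ p : Fin Np × Fin s, (x (τ p.1 p.2)) ^ 2 :=
        Finset.sum_le_sum_of_subset_of_nonneg (Finset.subset_univ _)
          (fun _ _ _ => sq_nonneg _)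
    _ = ∑ i : Fin Np, ∑ j : Fin s, (x (τ i j)) ^ 2 :=
        Fintype.sum_prod_type (f := fun p : Fin Np × Fin s => (x (τ p.1 p.2)) ^ 2)

set_option maxHeartbeats 1600000

/-- Proposition 1 of the paper: if every pixel is covered by at least
one patch and `T` is a bi-Lipschitz `C¹` diffeomorphism of `ℝ^s`, then for every
`ρ > 0` the function `φ(x) = exp(-ρ · patchNR x)` is Lebesgue integrable on `ℝ^d`. -/
theorem stmt_6 (d s Np : ℕ) (hd : 0 < d) (hs : 0 < s) (hNp : 0 < Np) (hsd : s ≤ d)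
    (τ : Fin Np → Fin s → Fin d) (hτ : ∀ i, Function.Injective (τ i))
    (hcover : ∀ k : Fin d, ∃ i j, τ i j = k)
    (T Tinv : EuclideanSpace ℝ (Fin s) → EuclideanSpace ℝ (Fin s))
    (hleft : Function.LeftInverse Tinv T) (hright : Function.RightInverse Tinv T)
    (hT : ContDiff ℝ 1 T) (hTinv : ContDiff ℝ 1 Tinv)
    (K L : NNReal) (hK : LipschitzWith K T) (hL : LipschitzWith L Tinv)
    (ρ : ℝ) (hρ : 0 < ρ) :
    Integrable (fun x : Fin d → ℝ => Real.exp (-ρ * patchNR d s Np τ Tinv x)) volume := by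
  classical
  let E := EuclideanSpace ℝ (Fin s)
  have hdiffT : Differentiable ℝ T := hT.differentiable one_ne_zero
  have hdiffTinv : Differentiable ℝ Tinv := hTinv.differentiable one_ne_zero
  -- bi-Lipschitz constants, strictly positive versions
  obtain ⟨K', hK'def⟩ : ∃ r : ℝ, r = (K : ℝ) + 1 := ⟨_, rfl⟩
  obtain ⟨L', hL'def⟩ : ∃ r : ℝ, r = (L : ℝ) + 1 := ⟨_, rfl⟩
  have hK'pos : (0 : ℝ) < K' := by rw [hK'def]; positivity
  have hL'pos : (0 : ℝ) < L' := by rw [hL'def]; positivity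
  have hKlip : LipschitzWith (K + 1) T := hK.weaken le_self_add
  have hLlip : LipschitzWith (L + 1) Tinv := hL.weaken le_self_add
  have hfd : ∀ p : E, ‖fderiv ℝ Tinv p‖ ≤ L' := by
    intro p
    have h := norm_fderiv_le_of_lipschitz ℝ (x₀ := p) hLlip
    rw [hL'def]; push_cast at h ⊢; exact h
  obtain ⟨a, hadef⟩ : ∃ r : ℝ, r = ‖T 0‖ := ⟨_, rfl⟩
  have ha0 : 0 ≤ a := hadef ▸ norm_nonneg _
  -- lower bound for ‖Tinv p‖²
  have hlow : ∀ p : E, (‖p‖ ^ 2 / 2 - a ^ 2) / K' ^ 2 ≤ ‖Tinv p‖ ^ 2 := by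
    intro p
    have h1 : ‖p‖ - a ≤ K' * ‖Tinv p‖ := by
      have h2 : dist (T (Tinv p)) (T 0) ≤ (K + 1 : NNReal) * dist (Tinv p) 0 :=
        hKlip.dist_le_mul (Tinv p) 0
      rw [hright p] at h2
      have h3 : ‖p‖ - a ≤ ‖p - T 0‖ := by
        rw [hadef]; exact norm_sub_norm_le _ _
      have h4 : dist p (T 0) = ‖p - T 0‖ := dist_eq_norm _ _
      have h5 : dist (Tinv p) 0 = ‖Tinv p‖ := dist_zero_right _
      have h6 : ((K + 1 : NNReal) : ℝ) = K' := by rw [hK'def]; push_cast; ring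
      rw [h4, h5, h6] at h2
      linarith
    have hTn : 0 ≤ ‖Tinv p‖ := norm_nonneg _
    have hpn : 0 ≤ ‖p‖ := norm_nonneg _
    rw [div_le_iff₀ (by positivity)]
    rcases le_or_gt ‖p‖ a with h | h
    · nlinarith
    · have h2 : 0 ≤ ‖p‖ - a := by linarith
      have h4 : (‖p‖ - a) ^ 2 ≤ (K' * ‖Tinv p‖) ^ 2 := by
        apply sq_le_sq' _ h1
        have h5 : 0 ≤ K' * ‖Tinv p‖ := mul_nonneg hK'pos.le hTn
        linarith
      have h6 : ‖p‖ ^ 2 / 2 - a ^ 2 ≤ (‖p‖ - a) ^ 2 := by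
        nlinarith [sq_nonneg (‖p‖ - 2 * a)]
      have h7 : (K' * ‖Tinv p‖) ^ 2 = ‖Tinv p‖ ^ 2 * K' ^ 2 := by ring
      linarith [h6, h4, h7.le, h7.ge]
  -- positivity of the pushforward density
  have hcomp : ∀ p : E,
      (fderiv ℝ Tinv p).comp (fderiv ℝ T (Tinv p)) = ContinuousLinearMap.id ℝ E := by
    intro p
    have h1 : HasFDerivAt (Tinv ∘ T)
        ((fderiv ℝ Tinv (T (Tinv p))).comp (fderiv ℝ T (Tinv p))) (Tinv p) :=
      (hdiffTinv _).hasFDerivAt.comp _ (hdiffT _).hasFDerivAt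
    have h2 : Tinv ∘ T = id := funext hleft
    rw [h2] at h1
    have h3 : HasFDerivAt (id : E → E) (ContinuousLinearMap.id ℝ E) (Tinv p) :=
      hasFDerivAt_id _
    have h4 := h1.unique h3
    rwa [hright p] at h4
  have hdetne : ∀ p : E, (fderiv ℝ Tinv p).det ≠ 0 := by
    intro p h0
    have h := congrArg ContinuousLinearMap.det (hcomp p)
    simp only [ContinuousLinearMap.det, ContinuousLinearMap.coe_comp,
      LinearMap.det_comp, ContinuousLinearMap.coe_id, LinearMap.det_id] at h
    have h0' : LinearMap.det
        ((fderiv ℝ Tinv p : EuclideanSpace ℝ (Fin s) →ₗ[ℝ] EuclideanSpace ℝ (Fin s))) = 0 := h0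
    have h' : LinearMap.det (fderiv ℝ Tinv p : E →ₗ[ℝ] E) *
        LinearMap.det (fderiv ℝ T (Tinv p) : E →ₗ[ℝ] E) = 1 := by
      rw [← LinearMap.det_comp]; exact h
    rw [h0', zero_mul] at h'
    exact zero_ne_one h'
  have hpos : ∀ p : E, 0 < pushforwardDensity s Tinv p := by
    intro p
    unfold pushforwardDensity stdGaussianDensity
    have h1 : (0 : ℝ) < (2 * Real.pi) ^ (-(s : ℝ) / 2) :=
      Real.rpow_pos_of_pos (by positivity) _
    have h2 : 0 < |(fderiv ℝ Tinv p).det| := abs_pos.mpr (hdetne p)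
    exact mul_pos (mul_pos h1 (Real.exp_pos _)) h2
  -- upper bound on the pushforward density
  set M : ℝ := (2 * Real.pi) ^ (-(s : ℝ) / 2) * ((Nat.factorial s : ℝ) * L' ^ s)
    with hMdef
  have hMpos : 0 < M := by
    have h1 : (0 : ℝ) < (2 * Real.pi) ^ (-(s : ℝ) / 2) :=
      Real.rpow_pos_of_pos (by positivity) _
    have h2 : (0 : ℝ) < (Nat.factorial s : ℝ) := by positivity
    rw [hMdef]; positivity
  have hpd : ∀ p : E, pushforwardDensity s Tinv p ≤
      M * Real.exp (-((‖p‖ ^ 2 / 2 - a ^ 2) / K' ^ 2) / 2) := by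
    intro p
    have hdetb : |(fderiv ℝ Tinv p).det| ≤ (Nat.factorial s : ℝ) * L' ^ s :=
      aux_abs_det_le _ hL'pos.le (hfd p)
    have hexp : Real.exp (-‖Tinv p‖ ^ 2 / 2) ≤
        Real.exp (-((‖p‖ ^ 2 / 2 - a ^ 2) / K' ^ 2) / 2) := by
      apply Real.exp_le_exp.mpr
      have := hlow p
      linarith
    unfold pushforwardDensity stdGaussianDensity
    have h1 : (0 : ℝ) < (2 * Real.pi) ^ (-(s : ℝ) / 2) :=
      Real.rpow_pos_of_pos (by positivity) _
    calc (2 * Real.pi) ^ (-(s : ℝ) / 2) * Real.exp (-‖Tinv p‖ ^ 2 / 2) *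
          |(fderiv ℝ Tinv p).det|
        ≤ (2 * Real.pi) ^ (-(s : ℝ) / 2) *
            Real.exp (-((‖p‖ ^ 2 / 2 - a ^ 2) / K' ^ 2) / 2) *
            ((Nat.factorial s : ℝ) * L' ^ s) := by
          apply mul_le_mul _ hdetb (abs_nonneg _) (by positivity)
          exact mul_le_mul_of_nonneg_left hexp h1.le
      _ = M * Real.exp (-((‖p‖ ^ 2 / 2 - a ^ 2) / K' ^ 2) / 2) := by
          rw [hMdef]; ring
  -- log bound
  have hlog : ∀ p : E, Real.log (pushforwardDensity s Tinv p) ≤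
      (Real.log M + a ^ 2 / (2 * K' ^ 2)) - (1 / (4 * K' ^ 2)) * ‖p‖ ^ 2 := by
    intro p
    have h1 := Real.log_le_log (hpos p) (hpd p)
    rw [Real.log_mul hMpos.ne' (Real.exp_pos _).ne', Real.log_exp] at h1
    have h2 : Real.log M + -((‖p‖ ^ 2 / 2 - a ^ 2) / K' ^ 2) / 2 =
        (Real.log M + a ^ 2 / (2 * K' ^ 2)) - (1 / (4 * K' ^ 2)) * ‖p‖ ^ 2 := by
      field_simp
      ring
    linarith [h2 ▸ h1]
  -- abbreviations for the pointwise bound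
  set A : ℝ := Real.log M + a ^ 2 / (2 * K' ^ 2) with hAdef
  set c : ℝ := 1 / (4 * K' ^ 2) with hcdef
  have hc0 : 0 < c := by rw [hcdef]; positivity
  set β : ℝ := (ρ / s) * c with hβdef
  have hρs : (0 : ℝ) < ρ / s := by
    have : (0 : ℝ) < (s : ℝ) := by exact_mod_cast hs
    positivity
  have hβ : 0 < β := by rw [hβdef]; positivity
  set C : ℝ := Real.exp ((ρ / s) * (Np * A)) with hCdef
  -- pointwise bound
  have hbound : ∀ x : Fin d → ℝ,
      Real.exp (-ρ * patchNR d s Np τ Tinv x) ≤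
        C * ∏ k, Real.exp (-β * (x k) ^ 2) := by
    intro x
    set P : Fin Np → E := fun i =>
      (WithLp.equiv 2 (Fin s → ℝ)).symm fun j => x (τ i j) with hPdef
    have hφ : -ρ * patchNR d s Np τ Tinv x =
        (ρ / s) * ∑ i, Real.log (pushforwardDensity s Tinv (P i)) := by
      unfold patchNR
      rw [Finset.sum_neg_distrib]
      ring
    have hPnorm : ∀ i, ‖P i‖ ^ 2 = ∑ j, (x (τ i j)) ^ 2 := by
      intro i
      rw [aux_euclid_norm_sq]
      rfl
    have hsum : ∑ i, Real.log (pushforwardDensity s Tinv (P i)) ≤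
        (Np : ℝ) * A - c * ∑ k, (x k) ^ 2 := by
      calc ∑ i, Real.log (pushforwardDensity s Tinv (P i))
          ≤ ∑ i : Fin Np, (A - c * ‖P i‖ ^ 2) :=
            Finset.sum_le_sum (fun i _ => hlog (P i))
        _ = (Np : ℝ) * A - c * ∑ i, ‖P i‖ ^ 2 := by
            rw [Finset.sum_sub_distrib, Finset.sum_const, Finset.card_univ,
              Fintype.card_fin, ← Finset.mul_sum]
            push_cast
            ring
        _ ≤ (Np : ℝ) * A - c * ∑ k, (x k) ^ 2 := by
            have h1 : ∑ k, (x k) ^ 2 ≤ ∑ i, ‖P i‖ ^ 2 := by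
              calc ∑ k, (x k) ^ 2 ≤ ∑ i : Fin Np, ∑ j : Fin s, (x (τ i j)) ^ 2 :=
                    aux_cover_sum τ hcover x
                _ = ∑ i, ‖P i‖ ^ 2 := by
                    refine Finset.sum_congr rfl fun i _ => ?_
                    rw [hPnorm i]
            nlinarith
    have hexp' : -ρ * patchNR d s Np τ Tinv x ≤
        (ρ / s) * ((Np : ℝ) * A) + -β * ∑ k, (x k) ^ 2 := by
      rw [hφ]
      have h1 := mul_le_mul_of_nonneg_left hsum hρs.le
      have h2 : (ρ / s) * ((Np : ℝ) * A - c * ∑ k, (x k) ^ 2) =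
          (ρ / s) * ((Np : ℝ) * A) + -β * ∑ k, (x k) ^ 2 := by
        rw [hβdef]; ring
      linarith [h2 ▸ h1]
    calc Real.exp (-ρ * patchNR d s Np τ Tinv x)
        ≤ Real.exp ((ρ / s) * ((Np : ℝ) * A) + -β * ∑ k, (x k) ^ 2) :=
          Real.exp_le_exp.mpr hexp'
      _ = C * Real.exp (-β * ∑ k, (x k) ^ 2) := by
          rw [Real.exp_add, hCdef]
      _ = C * ∏ k, Real.exp (-β * (x k) ^ 2) := by
          rw [← Real.exp_sum, Finset.mul_sum]
  -- integrability of the majorant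
  have hmaj : Integrable
      (fun x : Fin d → ℝ => C * ∏ k, Real.exp (-β * (x k) ^ 2)) volume := by
    have h1 : ∀ k : Fin d, Integrable (fun t : ℝ => Real.exp (-β * t ^ 2)) volume :=
      fun _ => integrable_exp_neg_mul_sq hβ
    exact (Integrable.fintype_prod (f := fun _ : Fin d => fun t : ℝ =>
      Real.exp (-β * t ^ 2)) h1).const_mul C
  -- measurability
  have hPcont : ∀ i : Fin Np,
      Continuous fun x : Fin d → ℝ =>
        ((WithLp.equiv 2 (Fin s → ℝ)).symm fun j => x (τ i j)) :=
    fun i => (PiLp.continuous_toLp _ _).comp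
      (continuous_pi fun j => continuous_apply _)
  have hpdcont : Continuous (pushforwardDensity s Tinv) := by
    unfold pushforwardDensity stdGaussianDensity
    have h1 : Continuous fun p : E => |(fderiv ℝ Tinv p).det| :=
      (ContinuousLinearMap.continuous_det.comp (hTinv.continuous_fderiv one_ne_zero)).abs
    have h2 : Continuous Tinv := hTinv.continuous
    exact (continuous_const.mul (Real.continuous_exp.comp
      ((((continuous_norm.comp h2).pow 2).neg).div_const 2))).mul h1
  have hmeas : Measurable fun x : Fin d → ℝ =>
      Real.exp (-ρ * patchNR d s Np τ Tinv x) := by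
    apply Real.measurable_exp.comp
    apply Measurable.const_mul
    unfold patchNR
    apply Measurable.const_mul
    apply Finset.measurable_sum
    intro i _
    exact (Real.measurable_log.comp
      (hpdcont.measurable.comp (hPcont i).measurable)).neg
  -- conclusion by comparison
  refine hmaj.mono' hmeas.aestronglyMeasurable ?_
  filter_upwards with x
  rw [Real.norm_eq_abs, Real.abs_exp]
  exact hbound x
end
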